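/- Let A be a ★-Green biset functor and φ: G → H a group homomorphism between objects. Then A(Res(φ)) restricts to a group homomorphism A(H)^{×,⊥} → A(G)^{×,⊥} on orthogonal units. If moreover φ is surjective, then A(Res(φ)) is injective, and any unit u ∈ A(H)^× with A(Res(φ))(u) orthogonal is itself orthogonal. -/
import Mathlib


set_option autoImplicit false
set_option maxHeartbeats 400000

/-! # Bisets

An `(H,G)`-biset is modelled as a finite `(H × G)`-set, via the usual dictionary
`(h,g) • x = h · x · g⁻¹`. -/

structure Biset (H G : Type) [Group H] [Group G] : Type 1 where
  carrier : Type
  fin : Finite carrier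
  smul : H × G → carrier → carrier
  one_smul' : ∀ x, smul 1 x = x
  mul_smul' : ∀ a b x, smul (a * b) x = smul a (smul b x)

namespace Biset

variable {G H K L : Type} [Group G] [Group H] [Group K] [Group L]

/-- An isomorphism of bisets: an equivariant bijection. -/
structure Iso (X Y : Biset H G) where
  toEquiv : X.carrier ≃ Y.carrier
  equivariant : ∀ a x, toEquiv (X.smul a x) = Y.smul a (toEquiv x)

/-- The relation defining the composition `Y ∘ X = Y ×_H X`. -/
def compRel (Y : Biset K H) (X : Biset H G) :
    Y.carrier × X.carrier → Y.carrier × X.carrier → Prop := fun p q =>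
  ∃ h : H, q.1 = Y.smul (1, h) p.1 ∧ q.2 = X.smul (h, 1) p.2

/-- Composition of bisets, `Y ∘ X = (Y × X)/H`. -/
def comp (Y : Biset K H) (X : Biset H G) : Biset K G where
  carrier := Quot (compRel Y X)
  fin := by
    have := Y.fin; have := X.fin
    exact Finite.of_surjective (Quot.mk _) fun q => Quot.inductionOn q fun a => ⟨a, rfl⟩
  smul a := Quot.map (fun p => (Y.smul (a.1, 1) p.1, X.smul (1, a.2) p.2)) (by
    rintro ⟨y, x⟩ ⟨y', x'⟩ ⟨h, h1, h2⟩
    dsimp only at h1 h2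
    refine ⟨h, ?_, ?_⟩
    · dsimp only
      rw [h1, ← Y.mul_smul', ← Y.mul_smul',
        show ((a.1, (1 : H)) : K × H) * (1, h) = ((1 : K), h) * (a.1, 1) by ext <;> simp]
    · dsimp only
      rw [h2, ← X.mul_smul', ← X.mul_smul',
        show (((1 : H), a.2) : H × G) * (h, 1) = (h, (1 : G)) * (1, a.2) by ext <;> simp])
  one_smul' x := Quot.inductionOn x fun p => by
    show Quot.mk _ (Y.smul (1, 1) p.1, X.smul (1, 1) p.2) = Quot.mk _ p
    rw [show ((1, 1) : K × H) = 1 from rfl, show ((1, 1) : H × G) = 1 from rfl,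
      Y.one_smul', X.one_smul']
  mul_smul' a b x := Quot.inductionOn x fun p => by
    show Quot.mk _ (Y.smul ((a * b).1, 1) p.1, X.smul (1, (a * b).2) p.2) = _
    have h1 : (((a * b).1, (1 : H)) : K × H) = (a.1, 1) * (b.1, 1) := by ext <;> simp
    have h2 : (((1 : H), (a * b).2) : H × G) = (1, a.2) * (1, b.2) := by ext <;> simp
    rw [h1, h2, Y.mul_smul', X.mul_smul']
    rfl

/-- The biset built from two homomorphisms into a group `M`, with two-sided
multiplication action. -/
def ofHoms {M : Type} [Group M] [Finite M] (f : H →* M) (g : G →* M) : Biset H G where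
  carrier := M
  fin := inferInstance
  smul a x := f a.1 * x * (g a.2)⁻¹
  one_smul' x := by simp
  mul_smul' a b x := by simp [mul_assoc]

/-- The induction biset `Ind(φ)` along `φ : G →* H`. -/
def ind {G H : Type} [Group G] [Group H] [Finite H] (φ : G →* H) : Biset H G :=
  ofHoms (MonoidHom.id H) φ

/-- The restriction biset `Res(φ)` along `φ : G →* H`. -/
def res {G H : Type} [Group G] [Group H] [Finite H] (φ : G →* H) : Biset G H :=
  ofHoms φ (MonoidHom.id H)

/-- `Iso(φ)` for a group isomorphism `φ`. -/
def isoB {G H : Type} [Group G] [Group H] [Finite H] (e : G ≃* H) : Biset H G :=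
  ind e.toMonoidHom

/-- The identity `(G,G)`-biset (the regular biset). -/
def idB (G : Type) [Group G] [Finite G] : Biset G G := ind (MonoidHom.id G)

/-- `→G` : the group `G` as a `(G × G, 1)`-biset. -/
def arrow (G : Type) [Group G] [Finite G] : Biset (G × G) PUnit where
  carrier := G
  fin := inferInstance
  smul a x := a.1.1 * x * a.1.2⁻¹
  one_smul' x := by simp
  mul_smul' a b x := by simp [mul_assoc]

/-- An `(H,G)`-biset regarded as an `(H × G, 1)`-biset. -/
def oneSided (X : Biset H G) : Biset (H × G) PUnit where
  carrier := X.carrier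
  fin := X.fin
  smul a x := X.smul a.1 x
  one_smul' := X.one_smul'
  mul_smul' a b x := X.mul_smul' a.1 b.1 x

/-- The opposite biset `X^op` of an `(H,G)`-biset: `g·x·h = h⁻¹ x g⁻¹`. -/
def op (X : Biset H G) : Biset G H where
  carrier := X.carrier
  fin := X.fin
  smul a x := X.smul (a.2, a.1) x
  one_smul' := X.one_smul'
  mul_smul' a b x := X.mul_smul' (a.2, a.1) (b.2, b.1) x

/-- The biset `K × ←H × G` implementing composition in associated categories,
as a `(K × G, (K × H) × (H × G))`-biset. -/
def middle (K H G : Type) [Group K] [Group H] [Group G] [Finite K] [Finite H] [Finite G] :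
    Biset (K × G) ((K × H) × (H × G)) where
  carrier := K × H × G
  fin := inferInstance
  smul a x :=
    (a.1.1 * x.1 * a.2.1.1⁻¹, a.2.1.2 * x.2.1 * a.2.2.1⁻¹, a.2.2.2 * x.2.2 * a.1.2⁻¹)
  one_smul' x := by obtain ⟨x1, x2, x3⟩ := x; simp
  mul_smul' a b x := by
    obtain ⟨⟨k, g⟩, ⟨k', h₁⟩, ⟨h₂, g'⟩⟩ := a
    obtain ⟨⟨k2, g2⟩, ⟨k2', h₁2⟩, ⟨h₂2, g'2⟩⟩ := b
    obtain ⟨x1, x2, x3⟩ := x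
    simp [mul_assoc]

/-- The biset `H × ←G` implementing the action of `Hom_{P_A}(G,H)` on `A(G)`,
as an `(H, (H × G) × G)`-biset. -/
def half (H G : Type) [Group H] [Group G] [Finite H] [Finite G] :
    Biset H ((H × G) × G) where
  carrier := H × G
  fin := inferInstance
  smul a x := (a.1 * x.1 * a.2.1.1⁻¹, a.2.1.2 * x.2 * a.2.2⁻¹)
  one_smul' x := by obtain ⟨x1, x2⟩ := x; simp
  mul_smul' a b x := by
    obtain ⟨h, ⟨h', g₁⟩, g₂⟩ := a
    obtain ⟨h2, ⟨h'2, g₁2⟩, g₂2⟩ := b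
    obtain ⟨x1, x2⟩ := x
    simp [mul_assoc]

/-- The biset `H × ←G × ←G × H`, as an
`(H × H, (H × G) × ((G × G) × (G × H)))`-biset. -/
def middle4 (H G : Type) [Group H] [Group G] [Finite H] [Finite G] :
    Biset (H × H) ((H × G) × ((G × G) × (G × H))) where
  carrier := H × G × G × H
  fin := inferInstance
  smul a x :=
    (a.1.1 * x.1 * a.2.1.1⁻¹, a.2.1.2 * x.2.1 * a.2.2.1.1⁻¹,
      a.2.2.1.2 * x.2.2.1 * a.2.2.2.1⁻¹, a.2.2.2.2 * x.2.2.2 * a.1.2⁻¹)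
  one_smul' x := by obtain ⟨x1, x2, x3, x4⟩ := x; simp
  mul_smul' a b x := by
    obtain ⟨⟨p, q⟩, ⟨h₁, g₁⟩, ⟨g₂, g₃⟩, ⟨g₄, h₂⟩⟩ := a
    obtain ⟨⟨pb, qb⟩, ⟨h₁b, g₁b⟩, ⟨g₂b, g₃b⟩, ⟨g₄b, h₂b⟩⟩ := b
    obtain ⟨x1, x2, x3, x4⟩ := x
    simp [mul_assoc]

/-- External product of bisets. -/
def bprod (X : Biset H G) (Y : Biset L K) : Biset (H × L) (G × K) where
  carrier := X.carrier × Y.carrier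
  fin := by have := X.fin; have := Y.fin; exact inferInstance
  smul a p := (X.smul (a.1.1, a.2.1) p.1, Y.smul (a.1.2, a.2.2) p.2)
  one_smul' p := by
    show (X.smul 1 p.1, Y.smul 1 p.2) = p
    rw [X.one_smul', Y.one_smul']
  mul_smul' a b p := by
    show (X.smul ((a.1.1, a.2.1) * (b.1.1, b.2.1)) p.1,
          Y.smul ((a.1.2, a.2.2) * (b.1.2, b.2.2)) p.2) = _
    rw [X.mul_smul', Y.mul_smul']

/-- Disjoint union of bisets. -/
def bsum (X Y : Biset H G) : Biset H G where
  carrier := X.carrier ⊕ Y.carrier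
  fin := by have := X.fin; have := Y.fin; exact inferInstance
  smul a p := Sum.map (X.smul a) (Y.smul a) p
  one_smul' p := by cases p <;> simp [Sum.map, X.one_smul', Y.one_smul']
  mul_smul' a b p := by cases p <;> simp [Sum.map, X.mul_smul', Y.mul_smul']

end Biset

/-- The diagonal homomorphism `G →* G × G`. -/
def diagHom (G : Type) [Group G] : G →* G × G := (MonoidHom.id G).prod (MonoidHom.id G)

/-! # Green biset functors -/

/-- A Green biset functor over `k` (with domain all finite groups): a biset functor
with compatible `k`-algebra structures on evaluations, such that restrictions are
algebra homomorphisms and the Frobenius identities hold. -/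
structure GreenBF (k : Type) [CommRing k] : Type 2 where
  obj : (G : Type) → [Group G] → [Fintype G] → Type
  ring : (G : Type) → [Group G] → [Fintype G] → Ring (obj G)
  alg : (G : Type) → [Group G] → [Fintype G] → haveI := ring G; Algebra k (obj G)
  map : {G H : Type} → [Group G] → [Fintype G] → [Group H] → [Fintype H] →
    Biset H G → obj G → obj H
  map_add : ∀ {G H : Type} [Group G] [Fintype G] [Group H] [Fintype H]
    (X : Biset H G) (a b : obj G),
    haveI := ring G; haveI := ring H
    map X (a + b) = map X a + map X b
  map_smul : ∀ {G H : Type} [Group G] [Fintype G] [Group H] [Fintype H]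
    (X : Biset H G) (c : k) (a : obj G),
    haveI := ring G; haveI := ring H; haveI := alg G; haveI := alg H
    map X (c • a) = c • map X a
  map_iso : ∀ {G H : Type} [Group G] [Fintype G] [Group H] [Fintype H]
    (X Y : Biset H G), Biset.Iso X Y → ∀ a, map X a = map Y a
  map_id : ∀ {G : Type} [Group G] [Fintype G] (a : obj G), map (Biset.idB G) a = a
  map_comp : ∀ {G H K : Type} [Group G] [Fintype G] [Group H] [Fintype H]
    [Group K] [Fintype K] (Y : Biset K H) (X : Biset H G) (a : obj G),
    map (Y.comp X) a = map Y (map X a)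
  map_bsum : ∀ {G H : Type} [Group G] [Fintype G] [Group H] [Fintype H]
    (X Y : Biset H G) (a : obj G),
    haveI := ring H
    map (X.bsum Y) a = map X a + map Y a
  res_mul : ∀ {G H : Type} [Group G] [Fintype G] [Group H] [Fintype H]
    (φ : G →* H) (a b : obj H),
    haveI := ring G; haveI := ring H
    map (Biset.res φ) (a * b) = map (Biset.res φ) a * map (Biset.res φ) b
  res_one : ∀ {G H : Type} [Group G] [Fintype G] [Group H] [Fintype H] (φ : G →* H),
    haveI := ring G; haveI := ring H
    map (Biset.res φ) (1 : obj H) = 1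
  frob1 : ∀ {G H : Type} [Group G] [Fintype G] [Group H] [Fintype H]
    (φ : G →* H) (a : obj H) (b : obj G),
    haveI := ring G; haveI := ring H
    a * map (Biset.ind φ) b = map (Biset.ind φ) (map (Biset.res φ) a * b)
  frob2 : ∀ {G H : Type} [Group G] [Fintype G] [Group H] [Fintype H]
    (φ : G →* H) (a : obj H) (b : obj G),
    haveI := ring G; haveI := ring H
    map (Biset.ind φ) b * a = map (Biset.ind φ) (b * map (Biset.res φ) a)

namespace GreenBF

variable {k : Type} [CommRing k]

/-- The identity element `ε_A ∈ A(1)`. -/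
def one1 (A : GreenBF k) : A.obj PUnit := haveI := A.ring PUnit; 1

/-- The external (bilinear) product `a × b ∈ A(G × H)`. -/
def xprod (A : GreenBF k) {G H : Type} [Group G] [Fintype G] [Group H] [Fintype H]
    (a : A.obj G) (b : A.obj H) : A.obj (G × H) :=
  haveI := A.ring (G × H)
  A.map (Biset.res (MonoidHom.fst G H)) a * A.map (Biset.res (MonoidHom.snd G H)) b

/-- Composition in the associated category `P_A` :
`Hom(G,H) = A(H × G)`, `α ∘ β = A(K×←H×G)(α × β)`. -/
def pcomp (A : GreenBF k) {G H K : Type} [Group G] [Fintype G] [Group H] [Fintype H]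
    [Group K] [Fintype K] (α : A.obj (K × H)) (β : A.obj (H × G)) : A.obj (K × G) :=
  A.map (Biset.middle K H G) (A.xprod α β)

/-- The identity morphism of `G` in `P_A` : `Id_G = A(→G)(ε_A)`. -/
def catId (A : GreenBF k) (G : Type) [Group G] [Fintype G] : A.obj (G × G) :=
  A.map (Biset.arrow G) A.one1

/-- The tilde map `ã = A(Ind Δ)(a) ∈ End_{P_A}(G)`. -/
def tilde (A : GreenBF k) {G : Type} [Group G] [Fintype G] (a : A.obj G) : A.obj (G × G) :=
  A.map (Biset.ind (diagHom G)) a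

/-- The image `e_{H×G}(→x) ∈ A(H × G)` of a biset under the initial morphism from
the Burnside functor. -/
def bsElt (A : GreenBF k) {G H : Type} [Group G] [Fintype G] [Group H] [Fintype H]
    (x : Biset H G) : A.obj (H × G) :=
  A.map x.oneSided A.one1

/-- The functor of double algebras: `E_A(x)(α) = e(→x) ∘ α ∘ e(→x^op)`. -/
def EA (A : GreenBF k) {G H : Type} [Group G] [Fintype G] [Group H] [Fintype H]
    (x : Biset H G) (α : A.obj (G × G)) : A.obj (H × H) :=
  A.pcomp (A.bsElt x) (A.pcomp α (A.bsElt x.op))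

/-- The action of `Hom_{P_A}(G,H) = A(H × G)` on `A(G)` : `A(α)(b)`. -/
def actOn (A : GreenBF k) {G H : Type} [Group G] [Fintype G] [Group H] [Fintype H]
    (α : A.obj (H × G)) (b : A.obj G) : A.obj H :=
  A.map (Biset.half H G) (A.xprod α b)

/-- The generalized inflation of endomorphisms
`ω ↦ Id_G + E_A(Inf)(ω − Id_Q)` along `π : G →* Q`. -/
def dAInf (A : GreenBF k) {G Q : Type} [Group G] [Fintype G] [Group Q] [Fintype Q]
    (π : G →* Q) (ω : A.obj (Q × Q)) : A.obj (G × G) :=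
  haveI := A.ring (G × G); haveI := A.ring (Q × Q)
  A.catId G + A.EA (Biset.res π) (ω - A.catId Q)

/-- An endomorphism `α ∈ End_{P_A}(G)`... more generally a morphism in `P_A` which is
an isomorphism. -/
def IsIsoP (A : GreenBF k) {G H : Type} [Group G] [Fintype G] [Group H] [Fintype H]
    (ω : A.obj (H × G)) : Prop :=
  ∃ ω' : A.obj (G × H), A.pcomp ω ω' = A.catId H ∧ A.pcomp ω' ω = A.catId G

/-- The opposite Green biset functor `A^op`. -/
def opp (A : GreenBF k) : GreenBF k where
  obj G := (A.obj G)ᵐᵒᵖ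
  ring G := letI := A.ring G; inferInstance
  alg G := letI := A.ring G; letI := A.alg G; inferInstance
  map X a := MulOpposite.op (A.map X a.unop)
  map_add := by
    intro G H _ _ _ _ X a b
    letI := A.ring G; letI := A.ring H
    apply MulOpposite.unop_injective
    exact A.map_add X a.unop b.unop
  map_smul := by
    intro G H _ _ _ _ X c a
    letI := A.ring G; letI := A.ring H; letI := A.alg G; letI := A.alg H
    apply MulOpposite.unop_injective
    exact A.map_smul X c a.unop
  map_iso := by
    intro G H _ _ _ _ X Y e a
    exact congrArg MulOpposite.op (A.map_iso X Y e a.unop)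
  map_id := by
    intro G _ _ a
    apply MulOpposite.unop_injective
    exact A.map_id a.unop
  map_comp := by
    intro G H K _ _ _ _ _ _ Y X a
    exact congrArg MulOpposite.op (A.map_comp Y X a.unop)
  map_bsum := by
    intro G H _ _ _ _ X Y a
    letI := A.ring H
    apply MulOpposite.unop_injective
    exact A.map_bsum X Y a.unop
  res_mul := by
    intro G H _ _ _ _ φ a b
    letI := A.ring G; letI := A.ring H
    apply MulOpposite.unop_injective
    exact A.res_mul φ b.unop a.unop
  res_one := by
    intro G H _ _ _ _ φ
    letI := A.ring G; letI := A.ring H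
    apply MulOpposite.unop_injective
    exact A.res_one φ
  frob1 := by
    intro G H _ _ _ _ φ a b
    letI := A.ring G; letI := A.ring H
    apply MulOpposite.unop_injective
    exact A.frob2 φ a.unop b.unop
  frob2 := by
    intro G H _ _ _ _ φ a b
    letI := A.ring G; letI := A.ring H
    apply MulOpposite.unop_injective
    exact A.frob1 φ a.unop b.unop

end GreenBF

/-- A morphism of Green biset functors. -/
structure GreenHom {k : Type} [CommRing k] (A C : GreenBF k) : Type 1 where
  app : ∀ (G : Type) [Group G] [Fintype G], A.obj G → C.obj G
  natural : ∀ {G H : Type} [Group G] [Fintype G] [Group H] [Fintype H]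
    (X : Biset H G) (a : A.obj G), app H (A.map X a) = C.map X (app G a)
  app_add : ∀ (G : Type) [Group G] [Fintype G] (a b : A.obj G),
    haveI := A.ring G; haveI := C.ring G
    app G (a + b) = app G a + app G b
  app_smul : ∀ (G : Type) [Group G] [Fintype G] (c : k) (a : A.obj G),
    haveI := A.ring G; haveI := C.ring G; haveI := A.alg G; haveI := C.alg G
    app G (c • a) = c • app G a
  app_mul : ∀ (G : Type) [Group G] [Fintype G] (a b : A.obj G),
    haveI := A.ring G; haveI := C.ring G
    app G (a * b) = app G a * app G b
  app_one : ∀ (G : Type) [Group G] [Fintype G],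
    haveI := A.ring G; haveI := C.ring G
    app G (1 : A.obj G) = 1

/-- An anti-involution on a Green biset functor: a biset functor endomorphism with
`a★★ = a` and `(ab)★ = b★ a★`. -/
structure AntiInvol {k : Type} [CommRing k] (A : GreenBF k) : Type 1 where
  app : ∀ (G : Type) [Group G] [Fintype G], A.obj G → A.obj G
  natural : ∀ {G H : Type} [Group G] [Fintype G] [Group H] [Fintype H]
    (X : Biset H G) (a : A.obj G), app H (A.map X a) = A.map X (app G a)
  app_add : ∀ (G : Type) [Group G] [Fintype G] (a b : A.obj G),
    haveI := A.ring G
    app G (a + b) = app G a + app G b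
  app_smul : ∀ (G : Type) [Group G] [Fintype G] (c : k) (a : A.obj G),
    haveI := A.ring G; haveI := A.alg G
    app G (c • a) = c • app G a
  invol : ∀ (G : Type) [Group G] [Fintype G] (a : A.obj G), app G (app G a) = a
  anti : ∀ (G : Type) [Group G] [Fintype G] (a b : A.obj G),
    haveI := A.ring G
    app G (a * b) = app G b * app G a

namespace GreenBF

variable {k : Type} [CommRing k]

/-- The duality `_^• = T ∘ P_δ` on the associated category induced by an
anti-involution: `α^• = A(Iso τ)(α★)`. -/
def bull (A : GreenBF k) (s : AntiInvol A) {G H : Type} [Group G] [Fintype G]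
    [Group H] [Fintype H] (α : A.obj (H × G)) : A.obj (G × H) :=
  A.map (Biset.isoB (MulEquiv.prodComm : H × G ≃* G × H)) (s.app (H × G) α)

/-- An orthogonal isomorphism in `P_A` : `ω^• = ω⁻¹`. -/
def IsOrthIso (A : GreenBF k) (s : AntiInvol A) {G H : Type} [Group G] [Fintype G]
    [Group H] [Fintype H] (ω : A.obj (H × G)) : Prop :=
  A.pcomp ω (A.bull s ω) = A.catId H ∧ A.pcomp (A.bull s ω) ω = A.catId G

end GreenBF

/-- Key biset fact: for a surjective `φ : G →* H`, `Ind(φ) ∘ Res(φ) ≅ H`. -/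
def indResIso {G H : Type} [Group G] [Group H] [Finite G] [Finite H] (φ : G →* H)
    (hs : Function.Surjective φ) :
    Biset.Iso ((Biset.ind φ).comp (Biset.res φ)) (Biset.idB H) where
  toEquiv :=
  { toFun := Quot.lift (fun p : H × H => p.1 * p.2) (by
      rintro ⟨y, x⟩ ⟨y', x'⟩ ⟨g, h1, h2⟩
      dsimp only [Biset.ind, Biset.res, Biset.ofHoms] at y x y' x' h1 h2
      show y * x = y' * x'
      rw [h1, h2]
      simp [mul_assoc])
    invFun := fun h : H => Quot.mk _ ((h, 1) : H × H)
    left_inv := fun q => Quot.inductionOn q (by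
      rintro ⟨y, x⟩
      dsimp only [Biset.ind, Biset.res, Biset.ofHoms] at y x
      obtain ⟨g, hg⟩ := hs x
      show Quot.mk _ (y * x, 1) = Quot.mk _ (y, x)
      refine Quot.sound ⟨g, ?_, ?_⟩
      · show y = 1 * (y * x) * (φ g)⁻¹
        simp [hg, mul_assoc]
      · show x = φ g * 1 * (1 : H)⁻¹
        simp [hg])
    right_inv := fun h => by
      dsimp only [Biset.idB, Biset.ind, Biset.ofHoms] at h
      show h * (1 : H) = h
      simp }
  equivariant := fun a x => Quot.inductionOn x (by
    rintro ⟨y, z⟩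
    dsimp only [Biset.ind, Biset.res, Biset.ofHoms] at y z
    show (a.1 * y * (φ 1)⁻¹) * (φ 1 * z * a.2⁻¹) = a.1 * (y * z) * a.2⁻¹
    simp [mul_assoc])
/-! STATEMENT 15: for a ★-Green biset functor `A` and `φ : G → H`, `A(Res φ)`
restricts to a group homomorphism on orthogonal units; if `φ` is surjective then
`A(Res φ)` is injective, and units whose restriction is orthogonal are
orthogonal. -/
theorem statement15 (k : Type) [CommRing k] (A : GreenBF k) (s : AntiInvol A)
    (G H : Type) [Group G] [Fintype G] [Group H] [Fintype H] (φ : G →* H) :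
    haveI := A.ring G; haveI := A.ring H
    (∀ u : (A.obj H)ˣ, s.app H ↑u = ↑u⁻¹ →
      (A.map (Biset.res φ) ↑u * A.map (Biset.res φ) (↑u⁻¹ : A.obj H) = 1
        ∧ A.map (Biset.res φ) (↑u⁻¹ : A.obj H) * A.map (Biset.res φ) ↑u = 1
        ∧ s.app G (A.map (Biset.res φ) ↑u) = A.map (Biset.res φ) (↑u⁻¹ : A.obj H)))
    ∧ (Function.Surjective φ →
        (Function.Injective (fun a : A.obj H => A.map (Biset.res φ) a)
          ∧ ∀ u : (A.obj H)ˣ,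
            s.app G (A.map (Biset.res φ) ↑u) = A.map (Biset.res φ) (↑u⁻¹ : A.obj H) →
              s.app H ↑u = ↑u⁻¹)) := by
  letI := A.ring G; letI := A.ring H
  constructor
  · intro u hu
    have h1 : A.map (Biset.res φ) ↑u * A.map (Biset.res φ) (↑u⁻¹ : A.obj H) = 1 := by
      rw [← A.res_mul, Units.mul_inv, A.res_one]
    have h2 : A.map (Biset.res φ) (↑u⁻¹ : A.obj H) * A.map (Biset.res φ) ↑u = 1 := by
      rw [← A.res_mul, Units.inv_mul, A.res_one]
    exact ⟨h1, h2, by rw [s.natural, hu]⟩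
  · intro hs
    have hinj : Function.Injective (fun a : A.obj H => A.map (Biset.res φ) a) := by
      intro a b hab
      have key : ∀ c : A.obj H, A.map (Biset.ind φ) (A.map (Biset.res φ) c) = c := by
        intro c
        rw [← A.map_comp, A.map_iso _ _ (indResIso φ hs), A.map_id]
      calc a = A.map (Biset.ind φ) (A.map (Biset.res φ) a) := (key a).symm
        _ = A.map (Biset.ind φ) (A.map (Biset.res φ) b) := congrArg _ hab
        _ = b := key b
    refine ⟨hinj, fun u hu => ?_⟩
    apply hinj
    show A.map (Biset.res φ) (s.app H ↑u) = A.map (Biset.res φ) (↑u⁻¹ : A.obj H)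
    rw [s.natural] at hu
    exact hu
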